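/- Let A be an n×n matrix with nonnegative integer entries such that each row sum and each column sum equals 3, and suppose A is the biadjacency matrix of a connected bipartite graph. Then per A ≥ 2 · (4/3)^n. -/

import Mathlib

/-- The permanent of an `n × n` matrix with natural-number entries. -/
def matPermanent {n : ℕ} (A : Matrix (Fin n) (Fin n) ℕ) : ℕ :=
  ∑ σ : Equiv.Perm (Fin n), ∏ i : Fin n, A i (σ i)

/-- The bipartite graph on `Fin n ⊕ Fin n` determined by the biadjacency relation `E`. -/
def bipGraph {n : ℕ} (E : Fin n → Fin n → Prop) : SimpleGraph (Fin n ⊕ Fin n) where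
  Adj a b := (∃ x y, a = Sum.inl x ∧ b = Sum.inr y ∧ E x y) ∨
    (∃ x y, a = Sum.inr y ∧ b = Sum.inl x ∧ E x y)
  symm := by
    constructor
    rintro a b (⟨x, y, rfl, rfl, h⟩ | ⟨x, y, rfl, rfl, h⟩)
    · exact Or.inr ⟨x, y, rfl, rfl, h⟩
    · exact Or.inl ⟨x, y, rfl, rfl, h⟩
  loopless := by
    constructor
    rintro a (⟨x, y, h1, h2, _⟩ | ⟨x, y, h1, h2, _⟩) <;> simp_all

open Finset

def minor {n : ℕ} (A : Matrix (Fin (n+1)) (Fin (n+1)) ℕ) (i j : Fin (n+1)) :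
    Matrix (Fin n) (Fin n) ℕ :=
  A.submatrix i.succAbove j.succAbove

def rowS {n : ℕ} (A : Matrix (Fin n) (Fin n) ℕ) (i : Fin n) : ℕ := ∑ j, A i j
def colS {n : ℕ} (A : Matrix (Fin n) (Fin n) ℕ) (j : Fin n) : ℕ := ∑ i, A i j

theorem matPermanent_eq {n : ℕ} (A : Matrix (Fin n) (Fin n) ℕ) :
    matPermanent A = Matrix.permanent (Matrix.transpose A) := by
  unfold matPermanent Matrix.permanent
  simp [Matrix.transpose_apply]

theorem matPermanent_submatrix {n : ℕ} (A : Matrix (Fin n) (Fin n) ℕ) (σ τ : Equiv.Perm (Fin n)) :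
    matPermanent (A.submatrix σ τ) = matPermanent A := by
  have h : A.submatrix σ τ = (A.submatrix σ id).submatrix id τ := rfl
  rw [matPermanent_eq, matPermanent_eq A, h]
  rw [Matrix.transpose_submatrix, Matrix.permanent_permute_cols]
  rw [Matrix.transpose_submatrix, Matrix.permanent_permute_rows]

theorem matPermanent_transpose {n : ℕ} (A : Matrix (Fin n) (Fin n) ℕ) :
    matPermanent (Matrix.transpose A) = matPermanent A := by
  rw [matPermanent_eq, Matrix.permanent_transpose, matPermanent_eq]

theorem per_expand_row0 {n : ℕ} (A : Matrix (Fin (n+1)) (Fin (n+1)) ℕ) :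
    matPermanent A = ∑ c : Fin (n+1), A 0 c * matPermanent (minor A 0 c) := by
  unfold matPermanent
  rw [← Equiv.sum_comp (Equiv.Perm.decomposeFin.symm) (fun σ => ∏ i, A i (σ i))]
  rw [← Finset.univ_product_univ, Finset.sum_product]
  refine Finset.sum_congr rfl fun c _ => ?_
  rw [Finset.mul_sum]
  have key : ∀ e : Equiv.Perm (Fin n),
      (∏ i, A i (Equiv.Perm.decomposeFin.symm (c, e) i)) =
      A 0 c * ∏ x : Fin n, A x.succ (Equiv.swap 0 c (e x).succ) := by
    intro e
    rw [Fin.prod_univ_succ]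
    simp [Equiv.Perm.decomposeFin_symm_apply_zero, Equiv.Perm.decomposeFin_symm_apply_succ]
  simp_rw [key]
  induction c using Fin.cases with
  | zero =>
    refine Finset.sum_congr rfl fun e _ => ?_
    congr 1
  | succ i =>
    have step1 : ∀ e : Equiv.Perm (Fin n),
        A 0 i.succ * (∏ x : Fin n, A x.succ (Equiv.swap 0 i.succ (e x).succ)) =
        A 0 i.succ * ∏ x : Fin n, A x.succ (i.succ.succAbove (i.cycleRange (e x))) := by
      intro e
      congr 1
      refine Finset.prod_congr rfl fun x _ => ?_
      rw [Fin.succAbove_cycleRange]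
    simp_rw [step1]
    exact Fintype.sum_equiv (Equiv.mulLeft i.cycleRange) _ _ fun e => rfl

theorem per_updateRow_add {n : ℕ} (A : Matrix (Fin n) (Fin n) ℕ) (i : Fin n) (u v : Fin n → ℕ) :
    matPermanent (A.updateRow i (u + v)) =
      matPermanent (A.updateRow i u) + matPermanent (A.updateRow i v) := by
  unfold matPermanent
  rw [← Finset.sum_add_distrib]
  refine Finset.sum_congr rfl fun σ _ => ?_
  rw [← Finset.mul_prod_erase univ _ (mem_univ i), ← Finset.mul_prod_erase univ _ (mem_univ i),
    ← Finset.mul_prod_erase univ _ (mem_univ i)]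
  have h1 : ∀ k ∈ univ.erase i, (A.updateRow i (u+v)) k (σ k) = A k (σ k) := by
    intro k hk; rw [Matrix.updateRow_ne (Finset.ne_of_mem_erase hk)]
  have h2 : ∀ k ∈ univ.erase i, (A.updateRow i u) k (σ k) = A k (σ k) := by
    intro k hk; rw [Matrix.updateRow_ne (Finset.ne_of_mem_erase hk)]
  have h3 : ∀ k ∈ univ.erase i, (A.updateRow i v) k (σ k) = A k (σ k) := by
    intro k hk; rw [Matrix.updateRow_ne (Finset.ne_of_mem_erase hk)]
  rw [Finset.prod_congr rfl h1, Finset.prod_congr rfl h2, Finset.prod_congr rfl h3]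
  simp [Matrix.updateRow_self, add_mul]

-- sums under submatrix by perms
theorem rowS_submatrix {n : ℕ} (A : Matrix (Fin n) (Fin n) ℕ) (σ τ : Equiv.Perm (Fin n)) (i : Fin n) :
    rowS (A.submatrix σ τ) i = rowS A (σ i) := by
  unfold rowS
  exact Equiv.sum_comp τ (fun j => A (σ i) j)

theorem colS_submatrix {n : ℕ} (A : Matrix (Fin n) (Fin n) ℕ) (σ τ : Equiv.Perm (Fin n)) (j : Fin n) :
    colS (A.submatrix σ τ) j = colS A (τ j) := by
  unfold colS
  exact Equiv.sum_comp σ (fun i => A i (τ j))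

-- minor sums (additive form, ℕ-friendly)
theorem rowS_minor {n : ℕ} (A : Matrix (Fin (n+1)) (Fin (n+1)) ℕ) (i j : Fin (n+1)) (k : Fin n) :
    rowS (minor A i j) k + A (i.succAbove k) j = rowS A (i.succAbove k) := by
  unfold rowS minor
  rw [Fin.sum_univ_succAbove (fun c => A (i.succAbove k) c) j]
  simp [Matrix.submatrix_apply, add_comm]

theorem colS_minor {n : ℕ} (A : Matrix (Fin (n+1)) (Fin (n+1)) ℕ) (i j : Fin (n+1)) (k : Fin n) :
    colS (minor A i j) k + A i (j.succAbove k) = colS A (j.succAbove k) := by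
  unfold colS minor
  rw [Fin.sum_univ_succAbove (fun r => A r (j.succAbove k)) i]
  simp [Matrix.submatrix_apply, add_comm]

-- profile lemmas
theorem sum_eq_one_profile {m : ℕ} (f : Fin m → ℕ) (h : ∑ j, f j = 1) :
    ∃ i0, ∀ j, f j = if j = i0 then 1 else 0 := by
  have hex : ∃ i, f i ≠ 0 := by
    by_contra hc
    push_neg at hc
    simp [hc] at h
  obtain ⟨i, hi⟩ := hex
  have hsplit : f i + ∑ j ∈ univ.erase i, f j = 1 := by
    rw [Finset.add_sum_erase univ f (mem_univ i)]; exact h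
  have hfi : f i = 1 := by omega
  have hrest : ∑ j ∈ univ.erase i, f j = 0 := by omega
  refine ⟨i, fun j => ?_⟩
  by_cases hj : j = i
  · simp [hj, hfi]
  · simp only [if_neg hj]
    exact Finset.sum_eq_zero_iff.mp hrest j (Finset.mem_erase.mpr ⟨hj, mem_univ j⟩)

theorem sum_eq_two_profile {m : ℕ} (f : Fin m → ℕ) (h : ∑ j, f j = 2) :
    (∃ i0, ∀ j, f j = if j = i0 then 2 else 0) ∨
    (∃ i1 i2, i1 ≠ i2 ∧ ∀ j, f j = if j = i1 then 1 else if j = i2 then 1 else 0) := by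
  have hex : ∃ i, f i ≠ 0 := by
    by_contra hc
    push_neg at hc
    simp [hc] at h
  obtain ⟨i, hi⟩ := hex
  have hsplit : f i + ∑ j ∈ univ.erase i, f j = 2 := by
    rw [Finset.add_sum_erase univ f (mem_univ i)]; exact h
  have hfi : f i = 1 ∨ f i = 2 := by omega
  rcases hfi with hfi | hfi
  · right
    have hrest : ∑ j ∈ univ.erase i, f j = 1 := by omega
    have hex2 : ∃ k ∈ univ.erase i, f k ≠ 0 := by
      by_contra hc
      push_neg at hc
      rw [Finset.sum_eq_zero hc] at hrest
      omega
    obtain ⟨k, hk, hfk⟩ := hex2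
    have hsplit2 : f k + ∑ j ∈ (univ.erase i).erase k, f j = 1 := by
      rw [Finset.add_sum_erase _ f hk]; exact hrest
    have hfk1 : f k = 1 := by omega
    have hrest2 : ∑ j ∈ (univ.erase i).erase k, f j = 0 := by omega
    have hik : i ≠ k := (Finset.ne_of_mem_erase hk).symm
    refine ⟨i, k, hik, fun j => ?_⟩
    by_cases hj : j = i
    · simp [hj, hfi]
    · by_cases hj2 : j = k
      · simp [hj, hj2, hfk1]
      · simp only [if_neg hj, if_neg hj2]
        exact Finset.sum_eq_zero_iff.mp hrest2 j
          (Finset.mem_erase.mpr ⟨hj2, Finset.mem_erase.mpr ⟨hj, mem_univ j⟩⟩)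
  · left
    have hrest : ∑ j ∈ univ.erase i, f j = 0 := by omega
    refine ⟨i, fun j => ?_⟩
    by_cases hj : j = i
    · simp [hj, hfi]
    · simp only [if_neg hj]
      exact Finset.sum_eq_zero_iff.mp hrest j (Finset.mem_erase.mpr ⟨hj, mem_univ j⟩)

theorem minor_transpose {n : ℕ} (A : Matrix (Fin (n+1)) (Fin (n+1)) ℕ) (i j : Fin (n+1)) :
    minor (Matrix.transpose A) i j = Matrix.transpose (minor A j i) := by
  ext x y
  simp [minor, Matrix.submatrix_apply, Matrix.transpose_apply]

theorem per_expand_col0 {n : ℕ} (A : Matrix (Fin (n+1)) (Fin (n+1)) ℕ) :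
    matPermanent A = ∑ i : Fin (n+1), A i 0 * matPermanent (minor A i 0) := by
  conv_lhs => rw [← matPermanent_transpose A, per_expand_row0]
  refine Finset.sum_congr rfl fun i _ => ?_
  rw [minor_transpose, matPermanent_transpose]
  rfl

theorem colS_updateRow {n : ℕ} (A : Matrix (Fin n) (Fin n) ℕ) (i : Fin n) (v : Fin n → ℕ)
    (j : Fin n) : colS (A.updateRow i v) j + A i j = colS A j + v j := by
  unfold colS
  rw [← Finset.add_sum_erase univ _ (mem_univ i), ← Finset.add_sum_erase univ (fun k => A k j) (mem_univ i)]
  have h : ∀ k ∈ univ.erase i, (A.updateRow i v) k j = A k j := by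
    intro k hk; rw [Matrix.updateRow_ne (Finset.ne_of_mem_erase hk)]
  rw [Finset.sum_congr rfl h, Matrix.updateRow_self]
  ring

theorem minor_updateRow0 {n : ℕ} (A : Matrix (Fin (n+1)) (Fin (n+1)) ℕ) (v : Fin (n+1) → ℕ)
    (c : Fin (n+1)) : minor (A.updateRow 0 v) 0 c = minor A 0 c := by
  ext x y
  unfold minor
  rw [Matrix.submatrix_apply, Matrix.submatrix_apply, Matrix.updateRow_ne]
  simp [Fin.succAbove]

theorem per_decrement {n : ℕ} (A : Matrix (Fin (n+1)) (Fin (n+1)) ℕ) (c₀ : Fin (n+1))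
    (h : 1 ≤ A 0 c₀) :
    matPermanent A =
      matPermanent (A.updateRow 0 (fun j => if j = c₀ then A 0 c₀ - 1 else A 0 j)) +
      matPermanent (minor A 0 c₀) := by
  rw [per_expand_row0, per_expand_row0 (A.updateRow 0 _)]
  have hm : ∀ c, minor (A.updateRow 0 (fun j => if j = c₀ then A 0 c₀ - 1 else A 0 j)) 0 c
      = minor A 0 c := fun c => minor_updateRow0 A _ c
  simp_rw [hm, Matrix.updateRow_self]
  rw [← Finset.add_sum_erase univ (fun c => A 0 c * matPermanent (minor A 0 c)) (mem_univ c₀),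
    ← Finset.add_sum_erase univ
      (fun c => (if c = c₀ then A 0 c₀ - 1 else A 0 c) * matPermanent (minor A 0 c)) (mem_univ c₀)]
  have hrest : ∀ k ∈ univ.erase c₀,
      (if k = c₀ then A 0 c₀ - 1 else A 0 k) * matPermanent (minor A 0 k)
        = A 0 k * matPermanent (minor A 0 k) := by
    intro k hk
    rw [if_neg (Finset.ne_of_mem_erase hk)]
  rw [Finset.sum_congr rfl hrest, if_pos rfl]
  have hA : A 0 c₀ = (A 0 c₀ - 1) + 1 := by omega
  calc A 0 c₀ * matPermanent (minor A 0 c₀) + ∑ k ∈ univ.erase c₀, A 0 k * matPermanent (minor A 0 k)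
      = ((A 0 c₀ - 1) + 1) * matPermanent (minor A 0 c₀) + ∑ k ∈ univ.erase c₀, A 0 k * matPermanent (minor A 0 k) := by rw [← hA]
    _ = (A 0 c₀ - 1) * matPermanent (minor A 0 c₀) + ∑ k ∈ univ.erase c₀, A 0 k * matPermanent (minor A 0 k) + matPermanent (minor A 0 c₀) := by ring

def Aprop (n : ℕ) : Prop := ∀ A : Matrix (Fin (n+1)) (Fin (n+1)) ℕ,
  (∀ i, rowS A i = 3) → (∀ j, colS A j = 3) → 3 * 4^n ≤ 3^n * matPermanent A
def Bprop (n : ℕ) : Prop := ∀ A : Matrix (Fin (n+1)) (Fin (n+1)) ℕ,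
  (∀ i, rowS A i = if i = 0 then 2 else 3) → (∀ j, colS A j = if j = 0 then 2 else 3) →
  2 * 4^n ≤ 3^n * matPermanent A
def Eprop (n : ℕ) : Prop := ∀ A : Matrix (Fin (n+1)) (Fin (n+1)) ℕ, ∀ u : Fin (n+1), u ≠ 0 →
  (∀ i, rowS A i = if i = 0 then 4 else if i = u then 2 else 3) → (∀ j, colS A j = 3) →
  2 * 4^(n+1) ≤ 3^(n+1) * matPermanent A

section Dec
variable {n : ℕ} (A : Matrix (Fin (n+1)) (Fin (n+1)) ℕ) (c₀ : Fin (n+1))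

/-- the decremented row -/
def decRow : Fin (n+1) → ℕ := fun j => if j = c₀ then A 0 c₀ - 1 else A 0 j

theorem decRow_add (h : 1 ≤ A 0 c₀) :
    ∀ j, decRow A c₀ j + (if j = c₀ then 1 else 0) = A 0 j := by
  intro j
  unfold decRow
  by_cases hj : j = c₀
  · simp only [if_pos hj]
    rw [hj]
    omega
  · simp [hj]

theorem rowS_dec0 (h : 1 ≤ A 0 c₀) :
    rowS (A.updateRow 0 (decRow A c₀)) 0 + 1 = rowS A 0 := by
  unfold rowS
  have h1 : ∀ j, (A.updateRow 0 (decRow A c₀)) 0 j = decRow A c₀ j := fun j => by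
    rw [Matrix.updateRow_self]
  rw [Finset.sum_congr rfl (fun j _ => h1 j)]
  have h2 : ∑ j, A 0 j = ∑ j, (decRow A c₀ j + (if j = c₀ then 1 else 0)) :=
    Finset.sum_congr rfl (fun j _ => (decRow_add A c₀ h j).symm)
  rw [h2, Finset.sum_add_distrib, Finset.sum_ite_eq' univ c₀ (fun _ => 1)]
  simp

theorem rowS_dec_ne (i : Fin (n+1)) (hi : i ≠ 0) :
    rowS (A.updateRow 0 (decRow A c₀)) i = rowS A i := by
  unfold rowS
  exact Finset.sum_congr rfl (fun j _ => by rw [Matrix.updateRow_ne hi])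

theorem colS_dec (h : 1 ≤ A 0 c₀) (j : Fin (n+1)) :
    colS (A.updateRow 0 (decRow A c₀)) j + (if j = c₀ then 1 else 0) = colS A j := by
  have hkey := colS_updateRow A 0 (decRow A c₀) j
  have h2 := decRow_add A c₀ h j
  omega

end Dec

theorem Bapply {n : ℕ} (hB : Bprop n) (A : Matrix (Fin (n+1)) (Fin (n+1)) ℕ) (u w : Fin (n+1))
    (hr : ∀ i, rowS A i = if i = u then 2 else 3)
    (hc : ∀ j, colS A j = if j = w then 2 else 3) :
    2 * 4^n ≤ 3^n * matPermanent A := by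
  have h1 : ∀ i : Fin (n+1), (Equiv.swap 0 u i = u) ↔ (i = 0) := by
    intro i
    constructor
    · intro h
      exact (Equiv.swap 0 u).injective (h.trans (Equiv.swap_apply_left 0 u).symm)
    · rintro rfl; exact Equiv.swap_apply_left 0 u
  have h2 : ∀ j : Fin (n+1), (Equiv.swap 0 w j = w) ↔ (j = 0) := by
    intro j
    constructor
    · intro h
      exact (Equiv.swap 0 w).injective (h.trans (Equiv.swap_apply_left 0 w).symm)
    · rintro rfl; exact Equiv.swap_apply_left 0 w
  have key := hB (A.submatrix (Equiv.swap 0 u) (Equiv.swap 0 w))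
    (fun i => by rw [rowS_submatrix, hr]; simp [h1 i])
    (fun j => by rw [colS_submatrix, hc]; simp [h2 j])
  rwa [matPermanent_submatrix] at key

theorem exists_max_minor {n : ℕ} (A : Matrix (Fin (n+1)) (Fin (n+1)) ℕ) (h : 1 ≤ rowS A 0) :
    ∃ c₀, 1 ≤ A 0 c₀ ∧ matPermanent A ≤ rowS A 0 * matPermanent (minor A 0 c₀) := by
  have hS : (univ.filter (fun c => 0 < A 0 c)).Nonempty := by
    by_contra hc
    rw [Finset.not_nonempty_iff_eq_empty, Finset.filter_eq_empty_iff] at hc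
    have : rowS A 0 = 0 := Finset.sum_eq_zero (fun c hcu => by
      have := hc hcu; omega)
    omega
  obtain ⟨c₀, hc₀, hmax⟩ := Finset.exists_max_image _ (fun c => matPermanent (minor A 0 c)) hS
  have hc₀' : 1 ≤ A 0 c₀ := (Finset.mem_filter.mp hc₀).2
  refine ⟨c₀, hc₀', ?_⟩
  rw [per_expand_row0]
  unfold rowS
  rw [Finset.sum_mul]
  refine Finset.sum_le_sum fun c _ => ?_
  by_cases hc : 0 < A 0 c
  · exact Nat.mul_le_mul_left _ (hmax c (Finset.mem_filter.mpr ⟨mem_univ c, hc⟩))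
  · have : A 0 c = 0 := by omega
    simp [this]

theorem AofB {n : ℕ} (hB : Bprop n) : Aprop n := by
  intro A hr hc
  have h0 : 1 ≤ rowS A 0 := by rw [hr]; omega
  obtain ⟨c₀, hge, hle⟩ := exists_max_minor A h0
  have hdec := per_decrement A c₀ hge
  have hr0 := rowS_dec0 A c₀ hge
  have hrne := rowS_dec_ne A c₀
  have hcd := colS_dec A c₀ hge
  set A' := A.updateRow 0 (decRow A c₀) with hA'
  have hr' : ∀ i, rowS A' i = if i = 0 then 2 else 3 := by
    intro i
    by_cases hi : i = 0
    · rw [hi, if_pos rfl]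
      have := hr 0
      omega
    · rw [if_neg hi, hrne i hi, hr i]
  have hc' : ∀ j, colS A' j = if j = c₀ then 2 else 3 := by
    intro j
    have h3 := hcd j
    have h4 := hc j
    by_cases hj : j = c₀
    · rw [if_pos hj]
      rw [if_pos hj] at h3
      omega
    · rw [if_neg hj]
      rw [if_neg hj] at h3
      omega
  have hYB : 2 * 4^n ≤ 3^n * matPermanent A' := Bapply hB A' 0 c₀ hr' hc'
  have hle3 : matPermanent A ≤ 3 * matPermanent (minor A 0 c₀) := by
    rw [hr 0] at hle
    exact hle
  have e1 : 3^n * matPermanent A = 3^n * matPermanent A' + 3^n * matPermanent (minor A 0 c₀) := by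
    rw [hdec, Nat.mul_add]; rfl
  have e2 : 3^n * matPermanent A ≤ 3 * (3^n * matPermanent (minor A 0 c₀)) := by
    calc 3^n * matPermanent A ≤ 3^n * (3 * matPermanent (minor A 0 c₀)) :=
          Nat.mul_le_mul_left _ hle3
      _ = 3 * (3^n * matPermanent (minor A 0 c₀)) := by ring
  omega

theorem EofB {n : ℕ} (hB : Bprop n) : Eprop n := by
  intro A u hu hr hc
  have hr0 : rowS A 0 = 4 := by have := hr 0; simpa using this
  have h0 : 1 ≤ rowS A 0 := by omega
  obtain ⟨c₀, hge, hle⟩ := exists_max_minor A h0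
  have hdec := per_decrement A c₀ hge
  have hd0 := rowS_dec0 A c₀ hge
  have hrne := rowS_dec_ne A c₀
  have hcd := colS_dec A c₀ hge
  set A' := A.updateRow 0 (decRow A c₀) with hA'
  have hr' : ∀ i, rowS A' i = if i = u then 2 else 3 := by
    intro i
    by_cases hi : i = 0
    · rw [hi, if_neg (Ne.symm hu)]
      omega
    · rw [hrne i hi, hr i, if_neg hi]
  have hc' : ∀ j, colS A' j = if j = c₀ then 2 else 3 := by
    intro j
    have h3 := hcd j
    have h4 := hc j
    by_cases hj : j = c₀
    · rw [if_pos hj]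
      rw [if_pos hj] at h3
      omega
    · rw [if_neg hj]
      rw [if_neg hj] at h3
      omega
  have hYB : 2 * 4^n ≤ 3^n * matPermanent A' := Bapply hB A' u c₀ hr' hc'
  have hle4 : matPermanent A ≤ 4 * matPermanent (minor A 0 c₀) := by
    rw [hr0] at hle
    exact hle
  have e1 : 3^n * matPermanent A = 3^n * matPermanent A' + 3^n * matPermanent (minor A 0 c₀) := by
    rw [hdec, Nat.mul_add]; rfl
  have e2 : 3^n * matPermanent A ≤ 4 * (3^n * matPermanent (minor A 0 c₀)) := by
    calc 3^n * matPermanent A ≤ 3^n * (4 * matPermanent (minor A 0 c₀)) :=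
          Nat.mul_le_mul_left _ hle4
      _ = 4 * (3^n * matPermanent (minor A 0 c₀)) := by ring
  have h3 : (3:ℕ)^(n+1) * matPermanent A = 3 * (3^n * matPermanent A) := by ring
  have h4 : (2:ℕ) * 4^(n+1) = 8 * 4^n := by ring
  rw [h3, h4]
  omega

theorem Bsucc {n : ℕ} (hA : Aprop n) (hB : Bprop n) (hE : Eprop n) : Bprop (n+1) := by
  intro B hr hc
  have hcol0 : ∑ i, B i 0 = 2 := by have := hc 0; simpa [colS] using this
  rcases sum_eq_two_profile (fun i => B i 0) hcol0 with ⟨i0, hprof⟩ | ⟨i1, i2, h12, hprof⟩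
  · -- column 0 is a single entry 2 at row i0
    have hexp : matPermanent B = 2 * matPermanent (minor B i0 0) := by
      rw [per_expand_col0]
      rw [Finset.sum_eq_single i0]
      · rw [hprof i0, if_pos rfl]
      · intro j _ hj
        rw [hprof j, if_neg hj, zero_mul]
      · intro h; exact absurd (mem_univ i0) h
    by_cases hi0 : i0 = 0
    · -- the deficient row is the one with the 2: minor is 3-regular
      subst hi0
      have hrowM : ∀ k, rowS (minor B 0 0) k = 3 := by
        intro k
        have h1 := rowS_minor B 0 0 k
        have h2 : B ((0:Fin (n+2)).succAbove k) 0 = 0 := by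
          rw [Fin.zero_succAbove, hprof, if_neg (Fin.succ_ne_zero k)]
        have h3 : rowS B ((0:Fin (n+2)).succAbove k) = 3 := by
          rw [Fin.zero_succAbove, hr, if_neg (Fin.succ_ne_zero k)]
        omega
      have hside : ∀ k : Fin (n+1), B 0 ((0:Fin (n+2)).succAbove k) = 0 := by
        have hr0 : rowS B 0 = 2 := by rw [hr]; simp
        have hsplit : rowS B 0 = B 0 0 + ∑ k, B 0 ((0:Fin (n+2)).succAbove k) := by
          unfold rowS
          exact Fin.sum_univ_succAbove (fun j => B 0 j) 0
        have hB00 : B 0 0 = 2 := by have := hprof 0; simpa using this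
        have hzero : ∑ k, B 0 ((0:Fin (n+2)).succAbove k) = 0 := by omega
        intro k
        exact Finset.sum_eq_zero_iff.mp hzero k (mem_univ k)
      have hcolM : ∀ k, colS (minor B 0 0) k = 3 := by
        intro k
        have h1 := colS_minor B 0 0 k
        have h2 := hside k
        have h3 : colS B ((0:Fin (n+2)).succAbove k) = 3 := by
          rw [Fin.zero_succAbove, hc, if_neg (Fin.succ_ne_zero k)]
        omega
      have hbound := hA (minor B 0 0) hrowM hcolM
      rw [hexp]
      have e1 : (3:ℕ)^(n+1) * (2 * matPermanent (minor B 0 0))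
          = 6 * (3^n * matPermanent (minor B 0 0)) := by ring
      have e2 : (2:ℕ) * 4^(n+1) = 8 * 4^n := by ring
      rw [e1, e2]
      omega
    · -- i0 ≠ 0 : full row with a 2 in column 0; minor is a B-class matrix
      obtain ⟨u'', hu''⟩ := Fin.exists_succAbove_eq (Ne.symm hi0 : (0:Fin (n+2)) ≠ i0)
      have hrowM : ∀ k, rowS (minor B i0 0) k = if k = u'' then 2 else 3 := by
        intro k
        have h1 := rowS_minor B i0 0 k
        have h2 : B (i0.succAbove k) 0 = 0 := by
          rw [hprof, if_neg (Fin.succAbove_ne i0 k)]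
        have h3 : rowS B (i0.succAbove k) = if k = u'' then 2 else 3 := by
          rw [hr]
          by_cases hk : k = u''
          · rw [if_pos hk, if_pos]; rw [hk, hu'']
          · rw [if_neg hk, if_neg]
            intro hcon
            exact hk (Fin.succAbove_right_injective (p := i0) (by rw [hu'', hcon]))
        by_cases hk : k = u''
        · rw [if_pos hk]; rw [if_pos hk] at h3; omega
        · rw [if_neg hk]; rw [if_neg hk] at h3; omega
      -- side profile of row i0
      have hrowi0 : rowS B i0 = 3 := by rw [hr, if_neg hi0]
      have hsplit : rowS B i0 = B i0 0 + ∑ k, B i0 ((0:Fin (n+2)).succAbove k) := by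
        unfold rowS
        exact Fin.sum_univ_succAbove (fun j => B i0 j) 0
      have hBi00 : B i0 0 = 2 := by have := hprof i0; simpa using this
      have hside1 : ∑ k, B i0 ((0:Fin (n+2)).succAbove k) = 1 := by omega
      obtain ⟨w'', hw''⟩ := sum_eq_one_profile _ hside1
      have hcolM : ∀ k, colS (minor B i0 0) k = if k = w'' then 2 else 3 := by
        intro k
        have h1 := colS_minor B i0 0 k
        have h2 := hw'' k
        have h3 : colS B ((0:Fin (n+2)).succAbove k) = 3 := by
          rw [Fin.zero_succAbove, hc, if_neg (Fin.succ_ne_zero k)]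
        by_cases hk : k = w''
        · rw [if_pos hk]; rw [if_pos hk] at h2; omega
        · rw [if_neg hk]; rw [if_neg hk] at h2; omega
      have hbound := Bapply hB (minor B i0 0) u'' w'' hrowM hcolM
      rw [hexp]
      have e1 : (3:ℕ)^(n+1) * (2 * matPermanent (minor B i0 0))
          = 6 * (3^n * matPermanent (minor B i0 0)) := by ring
      have e2 : (2:ℕ) * 4^(n+1) = 8 * 4^n := by ring
      rw [e1, e2]
      omega
  · -- column 0 has two unit entries at i1 ≠ i2
    have hj2ne : Equiv.swap (0:Fin (n+2)) i1 i2 ≠ 0 := by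
      intro h
      have h' : Equiv.swap (0:Fin (n+2)) i1 (Equiv.swap (0:Fin (n+2)) i1 i2)
          = Equiv.swap (0:Fin (n+2)) i1 0 := by rw [h]
      rw [Equiv.swap_apply_self, Equiv.swap_apply_left] at h'
      exact h12 h'.symm
    set σ : Equiv.Perm (Fin (n+2)) :=
      (Equiv.swap (0:Fin (n+2)) i1) * (Equiv.swap (1:Fin (n+2)) (Equiv.swap (0:Fin (n+2)) i1 i2))
      with hσ
    have hσ0 : σ 0 = i1 := by
      rw [hσ, Equiv.Perm.mul_apply,
        Equiv.swap_apply_of_ne_of_ne (by simp : (0:Fin (n+2)) ≠ 1) (Ne.symm hj2ne),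
        Equiv.swap_apply_left]
    have hσ1 : σ 1 = i2 := by
      rw [hσ, Equiv.Perm.mul_apply, Equiv.swap_apply_left, Equiv.swap_apply_self]
    set B2 := B.submatrix σ (1 : Equiv.Perm (Fin (n+2))) with hB2
    have perB2 : matPermanent B2 = matPermanent B := matPermanent_submatrix B σ 1
    have c0 : ∀ k, B2 k 0 = if k = 0 then 1 else if k = 1 then 1 else 0 := by
      intro k
      have hB2k : B2 k 0 = B (σ k) 0 := rfl
      rw [hB2k, hprof (σ k)]
      by_cases hk0 : k = 0
      · subst hk0
        rw [hσ0, if_pos rfl, if_pos rfl]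
      · by_cases hk1 : k = 1
        · subst hk1
          rw [hσ1, if_neg (Ne.symm h12), if_pos rfl, if_neg hk0, if_pos rfl]
        · rw [if_neg, if_neg, if_neg hk0, if_neg hk1]
          · intro hc; exact hk1 (σ.injective (hσ1 ▸ hc))
          · intro hc; exact hk0 (σ.injective (hσ0 ▸ hc))
    have hr2 : ∀ k, rowS B2 k = if σ k = 0 then 2 else 3 := by
      intro k
      rw [hB2, rowS_submatrix]
      exact hr (σ k)
    have hc2 : ∀ j, colS B2 j = if j = 0 then 2 else 3 := by
      intro j
      rw [hB2, colS_submatrix]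
      exact hc j
    -- expansion along column 0 of B2
    have hexp : matPermanent B2 =
        matPermanent (minor B2 0 0) + matPermanent (minor B2 1 0) := by
      rw [per_expand_col0]
      have hz : ∀ k ∈ (univ.erase (0 : Fin (n+2))).erase 1,
          B2 k 0 * matPermanent (minor B2 k 0) = 0 := by
        intro k hk
        have hk1 : k ≠ 1 := (Finset.mem_erase.mp hk).1
        have hk0 : k ≠ 0 := (Finset.mem_erase.mp (Finset.mem_erase.mp hk).2).1
        rw [c0 k, if_neg hk0, if_neg hk1, zero_mul]
      have h1mem : (1 : Fin (n+2)) ∈ univ.erase (0 : Fin (n+2)) :=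
        Finset.mem_erase.mpr ⟨by simp, mem_univ 1⟩
      rw [← Finset.add_sum_erase univ _ (mem_univ (0 : Fin (n+2))),
        ← Finset.add_sum_erase _ _ h1mem, Finset.sum_eq_zero hz,
        c0 0, c0 1, if_pos rfl, if_neg (by simp : (1:Fin (n+2)) ≠ 0), if_pos rfl]
      ring
    -- the merged matrix D
    set M0 := minor B2 0 0 with hM0
    have hM0row0 : M0 0 = fun c => B2 1 (Fin.succ c) := by
      funext c
      show B2 ((0:Fin (n+2)).succAbove 0) ((0:Fin (n+2)).succAbove c) = _
      rw [Fin.zero_succAbove, Fin.zero_succAbove, Fin.succ_zero_eq_one]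
    set D := M0.updateRow 0 ((fun c => B2 1 (Fin.succ c)) + (fun c => B2 0 (Fin.succ c)))
      with hD
    have hsecond : M0.updateRow 0 (fun c => B2 0 (Fin.succ c)) = minor B2 1 0 := by
      ext r c
      by_cases hr0 : r = 0
      · subst hr0
        rw [Matrix.updateRow_self]
        show B2 0 c.succ = B2 ((1:Fin (n+2)).succAbove 0) ((0:Fin (n+2)).succAbove c)
        rw [Fin.zero_succAbove]
        congr 1
      · rw [Matrix.updateRow_ne hr0]
        show B2 ((0:Fin (n+2)).succAbove r) ((0:Fin (n+2)).succAbove c)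
          = B2 ((1:Fin (n+2)).succAbove r) ((0:Fin (n+2)).succAbove c)
        congr 1
        rw [Fin.zero_succAbove, Fin.succAbove_of_le_castSucc]
        have hv : r.val ≠ 0 := fun hc => hr0 (Fin.ext hc)
        rw [Fin.le_def]
        simp only [Fin.coe_castSucc, Fin.val_one]
        omega
    have perD : matPermanent D = matPermanent (minor B2 0 0) + matPermanent (minor B2 1 0) := by
      rw [hD, per_updateRow_add, ← hM0row0, Matrix.updateRow_eq_self, hsecond, hM0]
    have perBD : matPermanent B = matPermanent D := by
      rw [← perB2, hexp, perD]
    -- row sums of D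
    have hDrow0 : rowS D 0 + 2 = rowS B2 0 + rowS B2 1 := by
      have h1 : rowS D 0 = (∑ c, B2 1 (Fin.succ c)) + (∑ c, B2 0 (Fin.succ c)) := by
        unfold rowS
        have hD0 : ∀ c, D 0 c = B2 1 (Fin.succ c) + B2 0 (Fin.succ c) := by
          intro c
          rw [hD, Matrix.updateRow_self]
          rfl
        rw [Finset.sum_congr rfl (fun c _ => hD0 c), Finset.sum_add_distrib]
      have h2 : rowS B2 0 = B2 0 0 + ∑ c, B2 0 (Fin.succ c) := by
        unfold rowS
        exact Fin.sum_univ_succ (fun j => B2 0 j)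
      have h3 : rowS B2 1 = B2 1 0 + ∑ c, B2 1 (Fin.succ c) := by
        unfold rowS
        exact Fin.sum_univ_succ (fun j => B2 1 j)
      have h4 : B2 0 0 = 1 := by rw [c0 0, if_pos rfl]
      have h5 : B2 1 0 = 1 := by rw [c0 1, if_neg (by simp : (1:Fin (n+2)) ≠ 0), if_pos rfl]
      omega
    have hDrowr : ∀ r : Fin (n+1), r ≠ 0 → rowS D r = rowS B2 (Fin.succ r) := by
      intro r hrr
      have h1 : rowS D r = rowS M0 r := by
        unfold rowS
        refine Finset.sum_congr rfl fun c _ => ?_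
        rw [hD, Matrix.updateRow_ne hrr]
      have h2 := rowS_minor B2 0 0 r
      rw [← hM0] at h2
      rw [Fin.zero_succAbove] at h2
      have h3 : B2 (Fin.succ r) 0 = 0 := by
        rw [c0, if_neg (Fin.succ_ne_zero r), if_neg]
        rw [← Fin.succ_zero_eq_one, Fin.succ_inj]
        exact hrr
      omega
    -- column sums of D
    have hDcol : ∀ c, colS D c = 3 := by
      intro c
      have h1 : colS D c = D 0 c + ∑ k, D (Fin.succ k) c := by
        unfold colS
        exact Fin.sum_univ_succ (fun r => D r c)
      have h2 : D 0 c = B2 1 (Fin.succ c) + B2 0 (Fin.succ c) := by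
        rw [hD, Matrix.updateRow_self]
        rfl
      have h3 : ∀ k : Fin n, D (Fin.succ k) c = B2 (Fin.succ (Fin.succ k)) (Fin.succ c) := by
        intro k
        rw [hD, Matrix.updateRow_ne (Fin.succ_ne_zero k)]
        show B2 ((0:Fin (n+2)).succAbove (Fin.succ k)) ((0:Fin (n+2)).succAbove c) = _
        rw [Fin.zero_succAbove, Fin.zero_succAbove]
      have h4 : colS B2 (Fin.succ c) = B2 0 (Fin.succ c) + (B2 1 (Fin.succ c)
          + ∑ k : Fin n, B2 (Fin.succ (Fin.succ k)) (Fin.succ c)) := by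
        unfold colS
        rw [Fin.sum_univ_succ (fun r => B2 r (Fin.succ c)),
          Fin.sum_univ_succ (fun r : Fin (n+1) => B2 (Fin.succ r) (Fin.succ c))]
        rw [Fin.succ_zero_eq_one]
      have h5 : colS B2 (Fin.succ c) = 3 := by
        rw [hc2, if_neg (Fin.succ_ne_zero c)]
      rw [h1, h2, Finset.sum_congr rfl (fun k _ => h3 k)]
      omega
    -- case split on where the deficient row of B went
    by_cases hdef : i1 = 0 ∨ i2 = 0
    · -- merged matrix is 3-regular
      have hrowD : ∀ r, rowS D r = 3 := by
        intro r
        by_cases hrr : r = 0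
        · subst hrr
          have e1 : rowS B2 0 = if σ 0 = 0 then 2 else 3 := hr2 0
          have e2 : rowS B2 1 = if σ 1 = 0 then 2 else 3 := hr2 1
          rw [hσ0] at e1
          rw [hσ1] at e2
          rcases hdef with hd | hd
          · rw [if_pos hd] at e1
            have : i2 ≠ 0 := by rw [← hd]; exact Ne.symm h12
            rw [if_neg this] at e2
            omega
          · rw [if_pos hd] at e2
            have : i1 ≠ 0 := by rw [← hd]; exact h12
            rw [if_neg this] at e1
            omega
        · rw [hDrowr r hrr, hr2]
          rw [if_neg]
          intro hcon
          rcases hdef with hd | hd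
          · have : Fin.succ r = 0 := σ.injective (by rw [hcon, hσ0, hd])
            exact Fin.succ_ne_zero r this
          · have : Fin.succ r = 1 := σ.injective (by rw [hcon, hσ1, hd])
            rw [← Fin.succ_zero_eq_one, Fin.succ_inj] at this
            exact hrr this
      have hbound := hA D hrowD hDcol
      rw [perBD]
      have e1 : (3:ℕ)^(n+1) * matPermanent D = 3 * (3^n * matPermanent D) := by ring
      have e2 : (2:ℕ) * 4^(n+1) = 8 * 4^n := by ring
      rw [e1, e2]
      omega
    · -- merged matrix is an E-class matrix
      push_neg at hdef
      obtain ⟨hi1, hi2⟩ := hdef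
      -- the deficient row of B2 is at position σ⁻¹ 0 = Fin.succ k1 with k1 ≠ 0
      have hr0ne0 : σ.symm 0 ≠ 0 := by
        intro hcon
        have : σ 0 = 0 := by conv_lhs => rw [← hcon, Equiv.apply_symm_apply]
        rw [hσ0] at this
        exact hi1 this
      have hr0ne1 : σ.symm 0 ≠ 1 := by
        intro hcon
        have : σ 1 = 0 := by conv_lhs => rw [← hcon, Equiv.apply_symm_apply]
        rw [hσ1] at this
        exact hi2 this
      obtain ⟨k1, hk1⟩ : ∃ k1 : Fin (n+1), Fin.succ k1 = σ.symm 0 := by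
        rcases Fin.eq_zero_or_eq_succ (σ.symm 0) with h | ⟨k, hk⟩
        · exact absurd h hr0ne0
        · exact ⟨k, hk.symm⟩
      have hk1ne0 : k1 ≠ 0 := by
        intro hcon
        rw [hcon, Fin.succ_zero_eq_one] at hk1
        exact hr0ne1 hk1.symm
      have hrowD : ∀ r, rowS D r = if r = 0 then 4 else if r = k1 then 2 else 3 := by
        intro r
        by_cases hrr : r = 0
        · subst hrr
          rw [if_pos rfl]
          have e1 : rowS B2 0 = if σ 0 = 0 then 2 else 3 := hr2 0
          have e2 : rowS B2 1 = if σ 1 = 0 then 2 else 3 := hr2 1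
          rw [hσ0, if_neg hi1] at e1
          rw [hσ1, if_neg hi2] at e2
          omega
        · rw [if_neg hrr, hDrowr r hrr, hr2]
          by_cases hrk : r = k1
          · rw [if_pos hrk, if_pos]
            rw [hrk, hk1, Equiv.apply_symm_apply]
          · rw [if_neg hrk, if_neg]
            intro hcon
            have : Fin.succ r = σ.symm 0 := by
              rw [← hcon, Equiv.symm_apply_apply]
            rw [← hk1, Fin.succ_inj] at this
            exact hrk this
      have hbound := hE D k1 hk1ne0 hrowD hDcol
      rw [perBD]
      exact hbound


theorem Bzero : Bprop 0 := by
  intro A hr hc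
  have h1 : matPermanent A = A 0 0 := by
    unfold matPermanent
    have hterm : ∀ σ : Equiv.Perm (Fin 1), (∏ i : Fin 1, A i (σ i)) = A 0 0 := by
      intro σ
      rw [Fin.prod_univ_one]
      congr 1
      exact Fin.ext (Nat.lt_one_iff.mp (σ 0).isLt)
    rw [Finset.sum_congr rfl (fun σ _ => hterm σ), Finset.sum_const, card_univ,
      smul_eq_mul]
    simp
  have h2 : rowS A 0 = A 0 0 := by
    unfold rowS
    exact Fin.sum_univ_one (fun j => A 0 j)
  have h3 := hr 0
  rw [if_pos rfl] at h3
  simp only [pow_zero, one_mul]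
  omega

theorem Ball : ∀ n, Bprop n := by
  intro n
  induction n with
  | zero => exact Bzero
  | succ m ih => exact Bsucc (AofB ih) ih (EofB ih)

theorem Aall (n : ℕ) : Aprop n := AofB (Ball n)

/-- If `A` is an `n × n` nonnegative integer matrix with all row and column sums equal to 3
which is the biadjacency matrix of a connected bipartite graph, then `per A ≥ 2 · (4/3)^n`. -/
theorem stmt6 (n : ℕ) (A : Matrix (Fin n) (Fin n) ℕ)
    (hrow : ∀ i : Fin n, ∑ j : Fin n, A i j = 3)
    (hcol : ∀ j : Fin n, ∑ i : Fin n, A i j = 3)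
    (hconn : (bipGraph (fun i j => 0 < A i j)).Connected) :
    2 * ((4 : ℝ) / 3) ^ n ≤ (matPermanent A : ℝ) := by
  cases n with
  | zero =>
    exfalso
    obtain ⟨v⟩ := hconn.nonempty
    rcases v with a | a
    · exact a.elim0
    · exact a.elim0
  | succ m =>
    have hbound := Aall m A (fun i => hrow i) (fun j => hcol j)
    have hcast : (3:ℝ) * 4^m ≤ 3^m * (matPermanent A : ℝ) := by
      exact_mod_cast hbound
    have hpow : (0:ℝ) < 3^(m+1) := by positivity
    rw [div_pow, ← mul_div_assoc, div_le_iff₀ hpow]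
    have e1 : (matPermanent A : ℝ) * 3^(m+1) = 3 * (3^m * (matPermanent A : ℝ)) := by ring
    have e2 : (2:ℝ) * 4^(m+1) = 8 * 4^m := by ring
    rw [e1, e2]
    nlinarith [pow_pos (show (0:ℝ) < 4 by norm_num) m]
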